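/- Let Σ be a signature with countably many connectives, M = ⟨V, D, ·_M⟩ a Σ-PNmatrix with V countable, and Ax ⊆ L_Σ(P). Then the strengthening ⊢_M^Ax of ⊢_M with axioms Ax is characterized by a Σ-PNmatrix with a countable set of truth-values (namely M♭_Ax, whose set of truth-values is a subset of V × L_Σ(P)). In particular, every axiomatic extension of the logic of a countable PNmatrix can be characterized by a countable PNmatrix. -/

import Mathlib

set_option autoImplicit false

namespace PNPaper

/-- Formulas over a propositional signature given by a type `C` of connectives
with arity function `ar`, generated over a set (type) `P` of sentential variables. -/
inductive Fm (C : Type) (ar : C → ℕ) (P : Type) : Type where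
  | var : P → Fm C ar P
  | app : (c : C) → (Fin (ar c) → Fm C ar P) → Fm C ar P

variable {C : Type} {ar : C → ℕ} {P Q : Type} {V W : Type}

/-- Substitution, extended to the unique endomorphism of the formula algebra. -/
def Fm.subst (σ : Q → Fm C ar P) : Fm C ar Q → Fm C ar P
  | .var q => σ q
  | .app c As => .app c (fun i => (As i).subst σ)

/-- The set of substitution instances of formulas in `Ax`. -/
def instSet (Ax : Set (Fm C ar P)) : Set (Fm C ar P) :=
  {B | ∃ A ∈ Ax, ∃ σ : P → Fm C ar P, B = A.subst σ}

/-- A formula uses only connectives from `S`. -/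
def Fm.usesOnly (S : Set C) : Fm C ar P → Prop
  | .var _ => True
  | .app c As => c ∈ S ∧ ∀ i, (As i).usesOnly S

/-- All variables of the formula belong to `Vs`. -/
def Fm.varsIn (Vs : Set P) : Fm C ar P → Prop
  | .var p => p ∈ Vs
  | .app _ As => ∀ i, (As i).varsIn Vs

/-- A Σ-PNmatrix: a set of truth-values (carrier), designated values,
and a (possibly partial, non-deterministic) truth-table for each connective. -/
structure Mat (C : Type) (ar : C → ℕ) (V : Type) where
  carrier : Set V
  desig : Set V
  int : (c : C) → (Fin (ar c) → V) → Set V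

/-- Well-formedness: `D ⊆ V` and truth-tables take values in `V`. -/
def Mat.WF (M : Mat C ar V) : Prop :=
  M.desig ⊆ M.carrier ∧
  ∀ (c : C) (xs : Fin (ar c) → V), (∀ i, xs i ∈ M.carrier) → M.int c xs ⊆ M.carrier

/-- An `M`-valuation. -/
def Mat.IsVal (M : Mat C ar V) (v : Fm C ar P → V) : Prop :=
  (∀ A, v A ∈ M.carrier) ∧
  ∀ (c : C) (As : Fin (ar c) → Fm C ar P), v (.app c As) ∈ M.int c (fun i => v (As i))

/-- The (single conclusion) consequence relation `⊢_M`. -/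
def Mat.Conseq (M : Mat C ar V) (Γ : Set (Fm C ar P)) (A : Fm C ar P) : Prop :=
  ∀ v : Fm C ar P → V, M.IsVal v → (∀ B ∈ Γ, v B ∈ M.desig) → v A ∈ M.desig

/-- The strengthening `⊢_M^Ax` of `⊢_M` with (schema) axioms `Ax`. -/
def Mat.ConseqAx (M : Mat C ar V) (Ax Γ : Set (Fm C ar P)) (A : Fm C ar P) : Prop :=
  M.Conseq (Γ ∪ instSet Ax) A

/-- The multiple-conclusion consequence relation `▷_M`. -/
def Mat.MConseq (M : Mat C ar V) (Γ Δ : Set (Fm C ar P)) : Prop :=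
  ∀ v : Fm C ar P → V, M.IsVal v → (∀ B ∈ Γ, v B ∈ M.desig) → ∃ B ∈ Δ, v B ∈ M.desig

/-- The set `A_M(x₁,…,xₙ)` of possible values of `A` when `pᵢ ↦ xᵢ`. -/
def Mat.fmSet (M : Mat C ar V) (n : ℕ) (A : Fm C ar ℕ) (xs : Fin n → V) : Set V :=
  {y | ∃ v : Fm C ar ℕ → V, M.IsVal v ∧ (∀ i : Fin n, v (Fm.var i.1) = xs i) ∧ v A = y}

/-- `M` is `S`-deterministic. -/
def Mat.DetOn (M : Mat C ar V) (S : Set C) : Prop :=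
  ∀ c ∈ S, ∀ xs : Fin (ar c) → V, (∀ i, xs i ∈ M.carrier) → (M.int c xs).Subsingleton

/-- `M` is total. -/
def Mat.Total (M : Mat C ar V) : Prop :=
  ∀ (c : C) (xs : Fin (ar c) → V), (∀ i, xs i ∈ M.carrier) → (M.int c xs).Nonempty

/-- `M'` is a refinement of `M`. -/
def IsRefinement (M' M : Mat C ar V) : Prop :=
  M'.carrier ⊆ M.carrier ∧
  M'.desig = M.desig ∩ M'.carrier ∧
  ∀ (c : C) (xs : Fin (ar c) → V), (∀ i, xs i ∈ M'.carrier) → M'.int c xs ⊆ M.int c xs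

/-- `E` is an expansion function for `M` with contraction `ct`:
the sets `E x` (for truth-values `x` of `M`) are non-empty and `ct` picks, for each
element of `E x`, the unique `x` it expands (this forces pairwise disjointness). -/
def IsExpansion (M : Mat C ar V) (E : V → Set W) (ct : W → V) : Prop :=
  (∀ x ∈ M.carrier, (E x).Nonempty) ∧
  (∀ x ∈ M.carrier, ∀ y ∈ E x, ct y = x)

/-- The `E`-expansion of `M`. -/
def expMat (M : Mat C ar V) (E : V → Set W) (ct : W → V) : Mat C ar W where
  carrier := ⋃ x ∈ M.carrier, E x
  desig := ⋃ x ∈ M.desig, E x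
  int := fun c ys => ⋃ x ∈ M.int c (fun i => ct (ys i)), E x

/-- A rexpansion of `M` is a refinement of some `E`-expansion of `M`. -/
def IsRexpansion (M' : Mat C ar W) (M : Mat C ar V) : Prop :=
  ∃ (E : V → Set W) (ct : W → V), IsExpansion M E ct ∧ IsRefinement M' (expMat M E ct)

/-- The truth-values of `M♭_Ax`: pairs `(x, A)` such that `x ∈ D` whenever `A ∈ Ax^inst`. -/
def flatCarrier {C : Type} {ar : C → ℕ} {V : Type} (M : Mat C ar V)
    (Ax : Set (Fm C ar ℕ)) : Set (V × Fm C ar ℕ) :=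
  {xa | xa.1 ∈ M.carrier ∧ (xa.2 ∈ instSet Ax → xa.1 ∈ M.desig)}

/-- The PNmatrix `M♭_Ax` of Theorem `flat`. -/
def flatMat {C : Type} {ar : C → ℕ} {V : Type} (M : Mat C ar V)
    (Ax : Set (Fm C ar ℕ)) : Mat C ar (V × Fm C ar ℕ) where
  carrier := flatCarrier M Ax
  desig := {xa | xa.1 ∈ M.desig} ∩ flatCarrier M Ax
  int := fun c ys =>
    {xa | xa ∈ flatCarrier M Ax ∧ xa.1 ∈ M.int c (fun i => (ys i).1) ∧
          xa.2 = Fm.app c (fun i => (ys i).2)}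

/-- Encoding of formulas into a W-type, to get countability. -/
def Fm.toW : Fm C ar P → WType (fun a : P ⊕ C => Sum.elim (fun _ : P => Fin 0) (fun c => Fin (ar c)) a)
  | .var p => ⟨Sum.inl p, Fin.elim0⟩
  | .app c As => ⟨Sum.inr c, fun i => (As i).toW⟩

lemma Fm.toW_inj : ∀ A B : Fm C ar P, A.toW = B.toW → A = B := by
  intro A
  induction A with
  | var p =>
    intro B h
    cases B with
    | var q => simp [Fm.toW] at h; cases h; rfl
    | app c As => simp [Fm.toW] at h; cases h
  | app c As ih =>
    intro B h
    cases B with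
    | var q => simp [Fm.toW] at h; cases h
    | app c' As' =>
      simp only [Fm.toW, WType.mk.injEq, Sum.inr.injEq] at h
      obtain ⟨rfl, h2⟩ := h
      have h2' := eq_of_heq h2
      have : As = As' := funext fun i => ih i (As' i) (congrFun h2' i)
      rw [this]

instance Fm.countable [Countable C] [Countable P] : Countable (Fm C ar P) := by
  have : Encodable (P ⊕ C) := Encodable.ofCountable _
  have : ∀ a : P ⊕ C, Fintype (Sum.elim (fun _ : P => Fin 0) (fun c => Fin (ar c)) a) := by
    rintro (p | c) <;> dsimp <;> infer_instance
  have : ∀ a : P ⊕ C, Encodable (Sum.elim (fun _ : P => Fin 0) (fun c => Fin (ar c)) a) := by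
    rintro (p | c) <;> dsimp <;> infer_instance
  exact Function.Injective.countable (f := fun A : Fm C ar P => A.toW)
    (fun A B h => Fm.toW_inj A B h)

lemma Fm.subst_subst (σ : Q → Fm C ar P) (τ : P → Fm C ar P) :
    ∀ A : Fm C ar Q, (A.subst σ).subst τ = A.subst (fun q => (σ q).subst τ) := by
  intro A
  induction A with
  | var q => rfl
  | app c As ih => simp only [Fm.subst]; congr 1; funext i; exact ih i

lemma flat_snd {M : Mat C ar V} {Ax : Set (Fm C ar ℕ)}
    {w : Fm C ar ℕ → V × Fm C ar ℕ} (hw : (flatMat M Ax).IsVal w) :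
    ∀ B : Fm C ar ℕ, (w B).2 = B.subst (fun p => (w (.var p)).2) := by
  intro B
  induction B with
  | var p => rfl
  | app c As ih =>
    have h := (hw.2 c As).2.2
    rw [h]
    simp only [Fm.subst]
    congr 1
    funext i
    exact ih i

/-- over a signature with countably many connectives, every axiomatic
extension of the logic of a countable PNmatrix is characterized by a countable
PNmatrix, namely `M♭_Ax`, whose truth-values live in `V × L_Σ(P)`. -/
theorem stmt6 {C : Type} {ar : C → ℕ} {V : Type} [Countable C]
    (M : Mat C ar V) (hWF : M.WF) (hV : M.carrier.Countable)
    (Ax : Set (Fm C ar ℕ)) :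
    (flatMat M Ax).carrier.Countable ∧
    ∀ (Γ : Set (Fm C ar ℕ)) (A : Fm C ar ℕ),
      M.ConseqAx Ax Γ A ↔ (flatMat M Ax).Conseq Γ A := by
  constructor
  · -- countability
    have hsub : (flatMat M Ax).carrier ⊆ M.carrier ×ˢ (Set.univ : Set (Fm C ar ℕ)) := by
      rintro ⟨x, a⟩ hx
      exact ⟨hx.1, trivial⟩
    exact Set.Countable.mono hsub (hV.prod Set.countable_univ)
  · intro Γ A
    constructor
    · -- ⊢_M^Ax → flat consequence
      intro h w hw hΓ
      set v : Fm C ar ℕ → V := fun B => (w B).1 with hv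
      have hval : M.IsVal v := by
        constructor
        · intro B; exact (hw.1 B).1
        · intro c As; exact (hw.2 c As).2.1
      have hprem : ∀ B ∈ Γ ∪ instSet Ax, v B ∈ M.desig := by
        intro B hB
        rcases hB with hB | hB
        · exact (hΓ B hB).1
        · -- B is an instance of an axiom; (w B).2 is too
          rcases hB with ⟨A0, hA0, σ, rfl⟩
          have hsnd := flat_snd hw (A0.subst σ)
          rw [Fm.subst_subst] at hsnd
          have : (w (A0.subst σ)).2 ∈ instSet Ax :=
            ⟨A0, hA0, _, hsnd⟩
          exact (hw.1 (A0.subst σ)).2 this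
      have := h v hval hprem
      exact ⟨this, hw.1 A⟩
    · -- flat consequence → ⊢_M^Ax
      intro h v hval hprem
      set w : Fm C ar ℕ → V × Fm C ar ℕ := fun B => (v B, B) with hwdef
      have hw : (flatMat M Ax).IsVal w := by
        constructor
        · intro B
          exact ⟨hval.1 B, fun hB => hprem B (Or.inr hB)⟩
        · intro c As
          refine ⟨⟨hval.1 _, fun hB => hprem _ (Or.inr hB)⟩, hval.2 c As, rfl⟩
      have hΓ : ∀ B ∈ Γ, w B ∈ (flatMat M Ax).desig := by
        intro B hB
        exact ⟨hprem B (Or.inl hB), hval.1 B, fun hi => hprem B (Or.inr hi)⟩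
      exact (h w hw hΓ).1

end PNPaper
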